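/- Let X ⊂ ℝⁿ be a nonempty convex compact set, A an m×n real matrix, B a ν×n real matrix, ‖·‖ a norm on ℝ^ν, ε ∈ (0,1), and for each x ∈ X let P_x be a Borel probability distribution on ℝᵐ. Let H = [h₁,…,h_N] be an m×N matrix such that for every x ∈ X and every ℓ ≤ N one has P_x({ξ : |h_ℓᵀξ| > 1}) ≤ ε/N. Let x̂^H : ℝᵐ → X be any measurable map satisfying ‖Hᵀω − HᵀA x̂^H(ω)‖_∞ = min_{u∈X} ‖Hᵀω − HᵀAu‖_∞ for all ω, and set ŵ^H(ω) = B x̂^H(ω). Then for every x ∈ X, P_{ξ∼P_x}({ξ : ‖Bx − ŵ^H(Ax+ξ)‖ > 𝔐[H]}) ≤ ε, where 𝔐[H] = max{‖Bz‖ : z ∈ 2X_s, ‖HᵀAz‖_∞ ≤ 2}. -/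

import Mathlib

open MeasureTheory Matrix

/-- Risk bound for the generic polyhedral estimate.  Given a contrast
matrix `H` whose columns `hℓ` satisfy `P_x {ξ : |hℓᵀξ| > 1} ≤ ε/N` for all signals
`x ∈ X`, any minimizer `x̂` of `u ↦ ‖Hᵀω − HᵀAu‖_∞` over `X` yields an estimate
`ŵ = B x̂` whose error exceeds `𝔐[H] = max{‖Bz‖ : z ∈ 2X_s, ‖HᵀAz‖_∞ ≤ 2}` with
probability at most `ε`.  Here `2X_s = X − X`. -/
theorem stmt0
    {n m ν N : ℕ} (hN : 0 < N)
    (X : Set (Fin n → ℝ)) (hXne : X.Nonempty) (hXconv : Convex ℝ X) (hXcomp : IsCompact X)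
    (A : Matrix (Fin m) (Fin n) ℝ) (B : Matrix (Fin ν) (Fin n) ℝ)
    (nrm : (Fin ν → ℝ) → ℝ)
    (nrm_add : ∀ u v, nrm (u + v) ≤ nrm u + nrm v)
    (nrm_smul : ∀ (c : ℝ) u, nrm (c • u) = |c| * nrm u)
    (nrm_eq_zero : ∀ u, nrm u = 0 ↔ u = 0)
    (ε : ℝ) (hε : ε ∈ Set.Ioo (0 : ℝ) 1)
    (P : (Fin n → ℝ) → Measure (Fin m → ℝ))
    (hP : ∀ x ∈ X, IsProbabilityMeasure (P x))
    (H : Matrix (Fin m) (Fin N) ℝ)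
    (hH : ∀ x ∈ X, ∀ ℓ : Fin N,
      P x {ξ | 1 < |Hᵀ ℓ ⬝ᵥ ξ|} ≤ ENNReal.ofReal (ε / N))
    (xhat : (Fin m → ℝ) → (Fin n → ℝ)) (hmeas : Measurable xhat)
    (hxhatX : ∀ ω, xhat ω ∈ X)
    -- `x̂(ω)` minimizes `u ↦ ‖Hᵀω − HᵀAu‖_∞` over `X` (the Pi norm on `Fin N → ℝ`
    -- is the sup norm)
    (hxhatmin : ∀ ω, ∀ u ∈ X,
      ‖Hᵀ.mulVec ω - Hᵀ.mulVec (A.mulVec (xhat ω))‖ ≤ ‖Hᵀ.mulVec ω - Hᵀ.mulVec (A.mulVec u)‖)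
    (𝔐 : ℝ)
    (h𝔐 : IsGreatest {c | ∃ x ∈ X, ∃ y ∈ X,
        ‖Hᵀ.mulVec (A.mulVec (x - y))‖ ≤ 2 ∧ c = nrm (B.mulVec (x - y))} 𝔐) :
    ∀ x ∈ X,
      P x {ξ | 𝔐 < nrm (B.mulVec x - B.mulVec (xhat (A.mulVec x + ξ)))}
        ≤ ENNReal.ofReal ε := by

  intro x hx
  have hNpos : (0:ℝ) < N := by exact_mod_cast hN
  have hsub : {ξ | 𝔐 < nrm (B.mulVec x - B.mulVec (xhat (A.mulVec x + ξ)))}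
      ⊆ ⋃ ℓ : Fin N, {ξ | 1 < |Hᵀ ℓ ⬝ᵥ ξ|} := by
    intro ξ hξ
    by_contra hc
    simp only [Set.mem_iUnion, Set.mem_setOf_eq, not_exists, not_lt] at hc
    set ω := A.mulVec x + ξ with hω
    have h1 : ‖Hᵀ.mulVec ξ‖ ≤ 1 := by
      rw [pi_norm_le_iff_of_nonneg (by norm_num)]
      intro ℓ
      rw [Real.norm_eq_abs]; exact hc ℓ
    have hdiff : Hᵀ.mulVec ω - Hᵀ.mulVec (A.mulVec x) = Hᵀ.mulVec ξ := by
      rw [← Matrix.mulVec_sub]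
      congr 1
      simp [hω]
    have h2 : ‖Hᵀ.mulVec ω - Hᵀ.mulVec (A.mulVec (xhat ω))‖ ≤ 1 := by
      refine le_trans (hxhatmin ω x hx) ?_
      rw [hdiff]; exact h1
    have h3 : ‖Hᵀ.mulVec (A.mulVec (x - xhat ω))‖ ≤ 2 := by
      have heq : Hᵀ.mulVec (A.mulVec (x - xhat ω)) =
          (Hᵀ.mulVec ω - Hᵀ.mulVec (A.mulVec (xhat ω))) - (Hᵀ.mulVec ξ) := by
        rw [Matrix.mulVec_sub, Matrix.mulVec_sub, ← hdiff]
        abel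
      rw [heq]
      calc ‖(Hᵀ.mulVec ω - Hᵀ.mulVec (A.mulVec (xhat ω))) - (Hᵀ.mulVec ξ)‖
          ≤ ‖Hᵀ.mulVec ω - Hᵀ.mulVec (A.mulVec (xhat ω))‖ + ‖Hᵀ.mulVec ξ‖ :=
            norm_sub_le _ _
        _ ≤ 2 := by linarith
    have hle : nrm (B.mulVec (x - xhat ω)) ≤ 𝔐 :=
      h𝔐.2 ⟨x, hx, xhat ω, hxhatX ω, h3, rfl⟩
    rw [Matrix.mulVec_sub] at hle
    exact absurd hξ (not_lt.mpr hle)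
  calc P x {ξ | 𝔐 < nrm (B.mulVec x - B.mulVec (xhat (A.mulVec x + ξ)))}
      ≤ P x (⋃ ℓ : Fin N, {ξ | 1 < |Hᵀ ℓ ⬝ᵥ ξ|}) := measure_mono hsub
    _ ≤ ∑ ℓ : Fin N, P x {ξ | 1 < |Hᵀ ℓ ⬝ᵥ ξ|} := measure_iUnion_fintype_le _ _
    _ ≤ ∑ _ℓ : Fin N, ENNReal.ofReal (ε / N) :=
        Finset.sum_le_sum fun ℓ _ => hH x hx ℓ
    _ = N * ENNReal.ofReal (ε / N) := by
        simp [Finset.sum_const, nsmul_eq_mul]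
    _ = ENNReal.ofReal ε := by
        rw [← ENNReal.ofReal_natCast, ← ENNReal.ofReal_mul (by positivity)]
        congr 1
        field_simp
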